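/- Fix integers N ≥ 2, 1 ≤ k₂ < N, reals B > 0 and C ≥ 0. Consider nondecreasing sequences λ_1 ≤ ... ≤ λ_N of reals with ∑_{i=1}^{k₂} λ_i = a and ∑_{i=1}^N λ_i = C, where 0 ≤ a ≤ k₂C/N. Then the infimum over all such sequences of f = BC∑_i λ_i² + ∑_i λ_i³ is attained at a = 0 or at a = k₂C/N. -/

import Mathlib

open Finset

set_option maxHeartbeats 1000000 in
theorem inf_attained_at_endpoint
    (N k₂ : ℕ) (hN : 2 ≤ N) (hk : 1 ≤ k₂) (hkN : k₂ < N)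
    (B C : ℝ) (hB : 0 < B) (hC : 0 ≤ C)
    (lam : ℕ → ℝ)
    (hmono : ∀ i j, i < N → j < N → i ≤ j → lam i ≤ lam j)
    (a : ℝ) (ha : ∑ i ∈ range k₂, lam i = a)
    (hsum : ∑ i ∈ range N, lam i = C)
    (ha0 : 0 ≤ a) (ha1 : a ≤ k₂ * C / N) :
    ∃ μ : ℕ → ℝ,
      (∀ i j, i < N → j < N → i ≤ j → μ i ≤ μ j) ∧
      (∑ i ∈ range N, μ i = C) ∧
      ((∑ i ∈ range k₂, μ i = 0) ∨ (∑ i ∈ range k₂, μ i = k₂ * C / N)) ∧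
      B * C * (∑ i ∈ range N, (μ i) ^ 2) + (∑ i ∈ range N, (μ i) ^ 3) ≤
        B * C * (∑ i ∈ range N, (lam i) ^ 2) + (∑ i ∈ range N, (lam i) ^ 3) := by
  by_cases hend : a = k₂ * C / N
  · exact ⟨lam, hmono, hsum, Or.inr (by rw [ha, hend]), le_rfl⟩
  have hNpos : (0:ℝ) < (N:ℝ) := by positivity
  have hNne : (N:ℝ) ≠ 0 := ne_of_gt hNpos
  set M : ℝ := k₂ * C / N with hM
  have hlt : a < M := lt_of_le_of_ne ha1 hend
  have hsub : (0:ℝ) < M - a := by linarith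
  set c : ℝ := C / N with hc
  set w : ℕ → ℝ := fun i => lam i - c with hw
  have hw0 : ∑ i ∈ range N, w i = 0 := by
    simp only [hw, Finset.sum_sub_distrib, hsum, Finset.sum_const, Finset.card_range,
      nsmul_eq_mul, hc]
    field_simp
    ring
  set S2 : ℝ := ∑ i ∈ range N, (w i) ^ 2 with hS2
  set S3 : ℝ := ∑ i ∈ range N, (w i) ^ 3 with hS3
  have key : ∀ t : ℝ,
      B * C * (∑ i ∈ range N, (c + t * w i) ^ 2) + (∑ i ∈ range N, (c + t * w i) ^ 3)
        = (B * C * ((N:ℝ) * c ^ 2) + (N:ℝ) * c ^ 3)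
          + (B * C + 3 * c) * S2 * t ^ 2 + S3 * t ^ 3 := by
    intro t
    have e2 : ∑ i ∈ range N, (c + t * w i) ^ 2
        = ∑ i ∈ range N, (c ^ 2 + (2 * c * t) * w i + t ^ 2 * (w i) ^ 2) :=
      Finset.sum_congr rfl fun i _ => by ring
    have e3 : ∑ i ∈ range N, (c + t * w i) ^ 3
        = ∑ i ∈ range N, (c ^ 3 + (3 * c ^ 2 * t) * w i + (3 * c * t ^ 2) * (w i) ^ 2
            + t ^ 3 * (w i) ^ 3) :=
      Finset.sum_congr rfl fun i _ => by ring
    rw [e2, e3]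
    simp only [Finset.sum_add_distrib, ← Finset.mul_sum, hw0, Finset.sum_const,
      Finset.card_range, nsmul_eq_mul, ← hS2, ← hS3]
    ring
  have hlam2 : ∑ i ∈ range N, (lam i) ^ 2 = ∑ i ∈ range N, (c + 1 * w i) ^ 2 :=
    Finset.sum_congr rfl fun i _ => by simp [hw]
  have hlam3 : ∑ i ∈ range N, (lam i) ^ 3 = ∑ i ∈ range N, (c + 1 * w i) ^ 3 :=
    Finset.sum_congr rfl fun i _ => by simp [hw]
  have hflam : B * C * (∑ i ∈ range N, (lam i) ^ 2) + (∑ i ∈ range N, (lam i) ^ 3)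
      = (B * C * ((N:ℝ) * c ^ 2) + (N:ℝ) * c ^ 3) + (B * C + 3 * c) * S2 + S3 := by
    rw [hlam2, hlam3, key 1]; ring
  have hcnn : 0 ≤ c := by positivity
  have hkc : (k₂:ℝ) * c = M := by rw [hc, hM]; ring
  have hwmono : ∀ i j, i < N → j < N → i ≤ j → w i ≤ w j :=
    fun i j hi hj hij => sub_le_sub_right (hmono i j hi hj hij) c
  have hk2sum : ∑ i ∈ range k₂, w i = a - k₂ * c := by
    simp only [hw, Finset.sum_sub_distrib, ha, Finset.sum_const, Finset.card_range,
      nsmul_eq_mul]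
  clear_value M c w S2 S3
  have hA : 0 ≤ (B * C + 3 * c) * S2 := by
    apply mul_nonneg
    · nlinarith
    · rw [hS2]; exact Finset.sum_nonneg fun i _ => sq_nonneg _
  by_cases hAE : 0 ≤ (B * C + 3 * c) * S2 + S3
  · -- take the constant sequence
    refine ⟨fun _ => c, fun i j _ _ _ => le_rfl, ?_, Or.inr ?_, ?_⟩
    · simp only [Finset.sum_const, Finset.card_range, nsmul_eq_mul, hc]
      field_simp
    · simpa only [Finset.sum_const, Finset.card_range, nsmul_eq_mul] using hkc
    · have h0 := key 0
      simp only [zero_mul, mul_zero, add_zero, ne_eq, OfNat.ofNat_ne_zero,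
        not_false_eq_true, zero_pow, mul_zero] at h0
      rw [h0, hflam]
      linarith
  · -- scale out to first-block sum 0
    push_neg at hAE
    set t₀ : ℝ := M / (M - a) with ht₀
    have ht₀1 : 1 ≤ t₀ := by
      rw [ht₀, le_div_iff₀ hsub]
      linarith
    have ht₀0 : 0 ≤ t₀ := le_trans zero_le_one ht₀1
    clear_value t₀
    refine ⟨fun i => c + t₀ * w i, ?_, ?_, Or.inl ?_, ?_⟩
    · intro i j hi hj hij
      have hwij : w i ≤ w j := hwmono i j hi hj hij
      exact add_le_add_right (mul_le_mul_of_nonneg_left hwij ht₀0) c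
    · dsimp only
      rw [Finset.sum_add_distrib, ← Finset.mul_sum, hw0, Finset.sum_const,
        Finset.card_range, nsmul_eq_mul, mul_zero, add_zero, hc]
      field_simp
    · dsimp only
      rw [Finset.sum_add_distrib, ← Finset.mul_sum, hk2sum, Finset.sum_const,
        Finset.card_range, nsmul_eq_mul, hkc, ht₀]
      field_simp
      ring
    · dsimp only
      rw [key t₀, hflam]
      have h1 : t₀ ^ 2 - 1 ≤ t₀ ^ 3 - 1 := by nlinarith [sq_nonneg t₀]
      have h2 : 0 ≤ t₀ ^ 2 - 1 := by nlinarith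
      have hA2 : (B * C + 3 * c) * S2 * (t₀ ^ 2 - 1) ≤ (B * C + 3 * c) * S2 * (t₀ ^ 3 - 1) :=
        mul_le_mul_of_nonneg_left h1 hA
      have hAE3 : ((B * C + 3 * c) * S2 + S3) * (t₀ ^ 3 - 1) ≤ 0 :=
        mul_nonpos_of_nonpos_of_nonneg (le_of_lt hAE) (le_trans h2 h1)
      nlinarith [hA2, hAE3]
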